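/- arXiv:1206.3826 — 2 statements merged into one kernel-verified Lean document; each statement's English description precedes it below -/
import Mathlib

section
/- For integers n, m, k ≥ 0 and real x, writing I_{n,m,k}(x) = ∫₀ˣ B_n(z)B_m(z)B_k(z) dz and C_{a,b,c}(x) = B_a(x)B_b(x)B_c(x) - B_a B_b B_c, we have I_{n,m,k}(x)/(n! m! k!) = ∑_{a=0}^{n+m} (-1)^a ∑_{i=0}^{a} C(a,i) · C_{n-a+i, m-i, k+a+1}(x) / ((n-a+i)! (m-i)! (k+a+1)!), where terms in which n-a+i < 0 or m-i < 0 are interpreted as zero. -/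
/-- The `k`-th Bernoulli polynomial evaluated at a real `x`. -/
noncomputable def B (k : ℕ) (x : ℝ) : ℝ :=
  Polynomial.aeval x (Polynomial.bernoulli k)

/-- `C̃_{a,b,c}(x)`: the normalized product-difference of three Bernoulli polynomials,
set to `0` whenever an index is negative. -/
noncomputable def Ct3 (a b c : ℤ) (x : ℝ) : ℝ :=
  if 0 ≤ a ∧ 0 ≤ b ∧ 0 ≤ c then
    (B a.toNat x * B b.toNat x * B c.toNat x -
        B a.toNat 0 * B b.toNat 0 * B c.toNat 0) /
      ((a.toNat.factorial : ℝ) * b.toNat.factorial * c.toNat.factorial)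
  else 0

lemma B_def (k : ℕ) : B k = fun x => ((Polynomial.bernoulli k).map (algebraMap ℚ ℝ)).eval x := by
  funext x
  rw [B, Polynomial.aeval_def, ← Polynomial.eval_map]

lemma continuous_B (k : ℕ) : Continuous (B k) := by
  rw [B_def]; exact Polynomial.continuous _

lemma hasDerivAt_B (k : ℕ) (x : ℝ) : HasDerivAt (B k) ((k : ℝ) * B (k - 1) x) x := by
  simp only [B_def]
  convert (((Polynomial.bernoulli k).map (algebraMap ℚ ℝ)).hasDerivAt x) using 1
  · rfl
  simp [Polynomial.derivative_map, Polynomial.derivative_bernoulli k]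

/-- normalized Bernoulli polynomial with integer index, zero for negative index -/
noncomputable def bb (j : ℤ) (x : ℝ) : ℝ :=
  if 0 ≤ j then B j.toNat x / j.toNat.factorial else 0

lemma bb_neg {j : ℤ} (h : j < 0) (x : ℝ) : bb j x = 0 := if_neg (not_le.mpr h)

lemma bb_natCast (j : ℕ) (x : ℝ) : bb j x = B j x / j.factorial := by
  simp [bb]

lemma continuous_bb (j : ℤ) : Continuous (bb j) := by
  unfold bb; split_ifs
  · exact (continuous_B _).div_const _
  · exact continuous_const

lemma hasDerivAt_bb (j : ℤ) (x : ℝ) : HasDerivAt (bb j) (bb (j - 1) x) x := by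
  rcases j with p | p
  · rcases p with _ | p
    · have : bb (Int.ofNat 0) = fun _ => (1 : ℝ) := by
        funext y; simp [bb, B, Polynomial.bernoulli_zero]
      rw [this]
      have : bb ((Int.ofNat 0) - 1) x = 0 := bb_neg (by decide) x
      rw [this]
      exact hasDerivAt_const x 1
    · have he : bb (Int.ofNat (p + 1)) = fun y => B (p + 1) y / (p + 1).factorial := by
        funext y; exact bb_natCast (p + 1) y
      rw [he]
      have h2 : bb ((Int.ofNat (p + 1)) - 1) x = B p x / p.factorial := by
        have : (Int.ofNat (p + 1)) - 1 = (p : ℤ) := by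
          simp only [Int.ofNat_eq_natCast]; push_cast; ring
        rw [this, bb_natCast]
      rw [h2]
      have := (hasDerivAt_B (p + 1) x).div_const ((p + 1).factorial : ℝ)
      convert this using 1
      · rfl
      · rfl
      rw [Nat.factorial_succ]
      have hp : (p.factorial : ℝ) ≠ 0 := Nat.cast_ne_zero.mpr (Nat.factorial_pos _).ne'
      field_simp
      rw [show p + 1 - 1 = p by omega]; push_cast
      ring
  · have h0 : bb (Int.negSucc p) = fun _ => (0 : ℝ) := by
      funext y; exact bb_neg (Int.negSucc_lt_zero p) y
    have h1 : bb ((Int.negSucc p) - 1) x = 0 :=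
      bb_neg (by have := Int.negSucc_lt_zero p; omega) x
    rw [h0, h1]
    exact hasDerivAt_const x 0

lemma bb_of_nonneg {j : ℤ} (h : 0 ≤ j) (x : ℝ) :
    bb j x = B j.toNat x / j.toNat.factorial := if_pos h

lemma Ct3_eq (p q r : ℤ) (x : ℝ) :
    Ct3 p q r x = bb p x * bb q x * bb r x - bb p 0 * bb q 0 * bb r 0 := by
  unfold Ct3
  split_ifs with h
  · obtain ⟨h1, h2, h3⟩ := h
    rw [bb_of_nonneg h1, bb_of_nonneg h2, bb_of_nonneg h3, bb_of_nonneg h1,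
      bb_of_nonneg h2, bb_of_nonneg h3]
    have ha : (p.toNat.factorial : ℝ) ≠ 0 := Nat.cast_ne_zero.mpr (Nat.factorial_ne_zero _)
    have hb : (q.toNat.factorial : ℝ) ≠ 0 := Nat.cast_ne_zero.mpr (Nat.factorial_ne_zero _)
    have hc : (r.toNat.factorial : ℝ) ≠ 0 := Nat.cast_ne_zero.mpr (Nat.factorial_ne_zero _)
    field_simp
  · symm
    by_cases hp : (0:ℤ) ≤ p
    · by_cases hq : (0:ℤ) ≤ q
      · have hr : ¬ (0:ℤ) ≤ r := fun hr => h ⟨hp, hq, hr⟩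
        rw [bb_neg (not_le.mp hr), bb_neg (not_le.mp hr)]; ring
      · rw [bb_neg (not_le.mp hq), bb_neg (not_le.mp hq)]; ring
    · rw [bb_neg (not_le.mp hp), bb_neg (not_le.mp hp)]; ring

noncomputable def U (n m k a : ℕ) (x : ℝ) : ℝ :=
  ∑ i ∈ Finset.range (a + 1), (a.choose i : ℝ) *
    (bb ((n : ℤ) - a + i) x * bb ((m : ℤ) - i) x * bb ((k : ℤ) + a) x)

noncomputable def F (n m k : ℕ) (x : ℝ) : ℝ :=
  ∑ a ∈ Finset.range (n + m + 1), (-1 : ℝ) ^ a *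
    ∑ i ∈ Finset.range (a + 1), (a.choose i : ℝ) *
      (bb ((n:ℤ) - a + i) x * bb ((m:ℤ) - i) x * bb ((k:ℤ) + a + 1) x)

lemma pascal_sum (a : ℕ) (g : ℕ → ℝ) :
    ∑ i ∈ Finset.range (a + 2), (((a+1).choose i : ℕ) : ℝ) * g i =
      ∑ i ∈ Finset.range (a + 1), (a.choose i : ℝ) * g i +
      ∑ i ∈ Finset.range (a + 1), (a.choose i : ℝ) * g (i + 1) := by
  rw [Finset.sum_range_succ' (fun i => (((a+1).choose i : ℕ) : ℝ) * g i) (a+1),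
    Finset.sum_range_succ' (fun i => ((a.choose i : ℕ) : ℝ) * g i) a]
  simp_rw [Nat.choose_succ_succ, Nat.cast_add, add_mul, Finset.sum_add_distrib]
  rw [Finset.sum_range_succ (fun i => ((a.choose (i+1) : ℕ) : ℝ) * g (i+1)) a]
  simp [Nat.choose_succ_self]
  ring

lemma U_zero (n m k : ℕ) (x : ℝ) : U n m k 0 x = bb n x * bb m x * bb k x := by
  unfold U
  simp

lemma U_top (n m k : ℕ) (x : ℝ) : U n m k (n + m + 1) x = 0 := by
  unfold U
  apply Finset.sum_eq_zero
  intro i _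
  rcases le_or_gt i m with h | h
  · have hneg : (n:ℤ) - ↑(n + m + 1) + i < 0 := by push_cast; omega
    rw [bb_neg hneg]; ring
  · have hneg : (m:ℤ) - i < 0 := by omega
    rw [bb_neg hneg]; ring

lemma inner_eq (n m k a : ℕ) (x : ℝ) :
    ∑ i ∈ Finset.range (a + 1), (a.choose i : ℝ) *
      ((bb ((n:ℤ)-a+i-1) x * bb ((m:ℤ)-i) x + bb ((n:ℤ)-a+i) x * bb ((m:ℤ)-i-1) x)
          * bb ((k:ℤ)+a+1) x
        + bb ((n:ℤ)-a+i) x * bb ((m:ℤ)-i) x * bb ((k:ℤ)+a+1-1) x)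
    = U n m k (a + 1) x + U n m k a x := by
  unfold U
  rw [pascal_sum a (fun i => bb ((n:ℤ) - ↑(a+1) + ↑i) x * bb ((m:ℤ) - ↑i) x *
      bb ((k:ℤ) + ↑(a+1)) x)]
  rw [add_assoc, ← Finset.sum_add_distrib, ← Finset.sum_add_distrib]
  apply Finset.sum_congr rfl
  intro i _
  push_cast
  ring_nf

lemma F_hasDerivAt (n m k : ℕ) (x : ℝ) :
    HasDerivAt (F n m k) (bb n x * bb m x * bb k x) x := by
  have hD : HasDerivAt (F n m k)
      (∑ a ∈ Finset.range (n + m + 1), (-1:ℝ)^a *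
        ∑ i ∈ Finset.range (a + 1), (a.choose i : ℝ) *
          ((bb ((n:ℤ)-a+i-1) x * bb ((m:ℤ)-i) x + bb ((n:ℤ)-a+i) x * bb ((m:ℤ)-i-1) x)
              * bb ((k:ℤ)+a+1) x
            + bb ((n:ℤ)-a+i) x * bb ((m:ℤ)-i) x * bb ((k:ℤ)+a+1-1) x)) x := by
    unfold F
    apply HasDerivAt.fun_sum
    intro a _
    apply HasDerivAt.const_mul
    apply HasDerivAt.fun_sum
    intro i _
    apply HasDerivAt.const_mul
    exact ((hasDerivAt_bb _ x).mul (hasDerivAt_bb _ x)).mul (hasDerivAt_bb _ x)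
  convert hD using 1
  symm
  calc ∑ a ∈ Finset.range (n + m + 1), (-1:ℝ)^a *
        ∑ i ∈ Finset.range (a + 1), (a.choose i : ℝ) *
          ((bb ((n:ℤ)-a+i-1) x * bb ((m:ℤ)-i) x + bb ((n:ℤ)-a+i) x * bb ((m:ℤ)-i-1) x)
              * bb ((k:ℤ)+a+1) x
            + bb ((n:ℤ)-a+i) x * bb ((m:ℤ)-i) x * bb ((k:ℤ)+a+1-1) x)
      = ∑ a ∈ Finset.range (n + m + 1),
          ((-1:ℝ)^a * U n m k a x - (-1:ℝ)^(a+1) * U n m k (a+1) x) := by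
        apply Finset.sum_congr rfl
        intro a _
        rw [inner_eq]
        rw [pow_succ]
        ring
    _ = (-1:ℝ)^0 * U n m k 0 x - (-1:ℝ)^(n+m+1) * U n m k (n+m+1) x :=
        Finset.sum_range_sub' (fun a => (-1:ℝ)^a * U n m k a x) (n+m+1)
    _ = bb n x * bb m x * bb k x := by
        rw [U_zero, U_top]
        ring

theorem integral_prod_three_bernoulli_poly (n m k : ℕ) (x : ℝ) :
    (∫ z in (0:ℝ)..x, B n z * B m z * B k z) /
        ((n.factorial : ℝ) * m.factorial * k.factorial) =
      ∑ a ∈ Finset.range (n + m + 1), (-1 : ℝ) ^ a *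
        ∑ i ∈ Finset.range (a + 1),
          (a.choose i : ℝ) *
            Ct3 ((n : ℤ) - a + i) ((m : ℤ) - i) ((k : ℤ) + a + 1) x := by
  have ftc : ∫ z in (0:ℝ)..x, bb n z * bb m z * bb k z = F n m k x - F n m k 0 :=
    intervalIntegral.integral_eq_sub_of_hasDerivAt
      (fun t _ => F_hasDerivAt n m k t)
      ((((continuous_bb _).mul (continuous_bb _)).mul (continuous_bb _)).intervalIntegrable _ _)
  have hL : (∫ z in (0:ℝ)..x, B n z * B m z * B k z) /
      ((n.factorial : ℝ) * m.factorial * k.factorial)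
      = ∫ z in (0:ℝ)..x, bb n z * bb m z * bb k z := by
    rw [← intervalIntegral.integral_div]
    apply intervalIntegral.integral_congr
    intro z _
    show B n z * B m z * B k z / _ = bb n z * bb m z * bb k z
    rw [bb_natCast, bb_natCast, bb_natCast, div_mul_div_comm, div_mul_div_comm]
  rw [hL, ftc]
  unfold F
  rw [← Finset.sum_sub_distrib]
  apply Finset.sum_congr rfl
  intro a _
  rw [← mul_sub, ← Finset.sum_sub_distrib]
  congr 1
  apply Finset.sum_congr rfl
  intro i _
  rw [← mul_sub]
  congr 1
  exact (Ct3_eq _ _ _ x).symm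
end

section
/- The integral from 0 to 1 of B_1(z)³·B_5(z) dz equals (1/2)·B_1²·B_6 + (1/56)·B_8 − (1/12)·B_6. -/
lemma bern'5 : bernoulli' 5 = 0 := bernoulli'_eq_zero_of_odd (by decide) (by norm_num)

lemma bern5 : bernoulli 5 = 0 := by
  rw [bernoulli_eq_bernoulli'_of_ne_one (by norm_num), bern'5]

lemma bern'6 : bernoulli' 6 = 1/42 := by
  rw [bernoulli'_def]
  norm_num [Finset.sum_range_succ, bern'5, Nat.choose]

lemma bern'7 : bernoulli' 7 = 0 := bernoulli'_eq_zero_of_odd (by decide) (by norm_num)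

lemma bern'8 : bernoulli' 8 = -1/30 := by
  rw [bernoulli'_def]
  norm_num [Finset.sum_range_succ, bern'5, bern'6, bern'7, Nat.choose]

lemma bern6 : bernoulli 6 = 1/42 := by
  rw [bernoulli_eq_bernoulli'_of_ne_one (by norm_num), bern'6]

lemma bern8 : bernoulli 8 = -1/30 := by
  rw [bernoulli_eq_bernoulli'_of_ne_one (by norm_num), bern'8]

lemma bern2 : bernoulli 2 = 1/6 := by
  rw [bernoulli_eq_bernoulli'_of_ne_one (by norm_num), bernoulli'_two]

lemma bern3 : bernoulli 3 = 0 := by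
  rw [bernoulli_eq_bernoulli'_of_ne_one (by norm_num), bernoulli'_three]

lemma bern4 : bernoulli 4 = -1/30 := by
  rw [bernoulli_eq_bernoulli'_of_ne_one (by norm_num), bernoulli'_four]

lemma hB1 (x : ℝ) : B 1 x = x - 1/2 := by
  simp [B, Polynomial.bernoulli, Finset.sum_range_succ]
  norm_num
  ring

lemma hB5 (x : ℝ) : B 5 x = x^5 - (5/2)*x^4 + (5/3)*x^3 - (1/6)*x := by
  simp [B, Polynomial.bernoulli, Finset.sum_range_succ, bern5, bern2, bern3, bern4, Nat.choose]
  norm_num [Nat.choose]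
  ring

lemma hB0 (k : ℕ) : B k 0 = (bernoulli k : ℝ) := by
  rw [B, Polynomial.aeval_def, ← Polynomial.eval_map,
    show ((0:ℝ)) = algebraMap ℚ ℝ 0 by norm_num, Polynomial.eval_map,
    Polynomial.eval₂_at_apply, Polynomial.bernoulli_eval_zero]
  simp

theorem integral_B1_cubed_B5 :
    ∫ z in (0:ℝ)..1, (B 1 z) ^ 3 * B 5 z =
      (1 / 2) * (B 1 0) ^ 2 * B 6 0 + (1 / 56) * B 8 0 - (1 / 12) * B 6 0 := by
  have h60 : B 6 0 = 1/42 := by rw [hB0, bern6]; norm_num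
  have h80 : B 8 0 = -1/30 := by rw [hB0, bern8]; norm_num
  have key : ∀ z : ℝ, HasDerivAt (fun z : ℝ =>
      (1/9)*z^9 - (1/2)*z^8 + (37/42)*z^7 - (3/4)*z^6 + (67/240)*z^5
        + (1/96)*z^4 - (1/24)*z^3 + (1/96)*z^2) ((B 1 z) ^ 3 * B 5 z) z := by
    intro z
    rw [hB1, hB5]
    have H := ((((((((hasDerivAt_pow 9 z).const_mul ((1:ℝ)/9)).sub
      ((hasDerivAt_pow 8 z).const_mul ((1:ℝ)/2))).add
      ((hasDerivAt_pow 7 z).const_mul ((37:ℝ)/42))).sub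
      ((hasDerivAt_pow 6 z).const_mul ((3:ℝ)/4))).add
      ((hasDerivAt_pow 5 z).const_mul ((67:ℝ)/240))).add
      ((hasDerivAt_pow 4 z).const_mul ((1:ℝ)/96))).sub
      ((hasDerivAt_pow 3 z).const_mul ((1:ℝ)/24))).add
      ((hasDerivAt_pow 2 z).const_mul ((1:ℝ)/96))
    convert H using 1 <;> try rfl
    push_cast
    ring
  rw [intervalIntegral.integral_eq_sub_of_hasDerivAt (fun z _ => key z)
      (by
        apply Continuous.intervalIntegrable
        have : Continuous fun z : ℝ => (z - 1/2)^3 * (z^5 - (5/2)*z^4 + (5/3)*z^3 - (1/6)*z) := by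
          continuity
        convert this using 1
        funext z
        rw [hB1, hB5])]
  rw [hB1, h60, h80]
  norm_num
end
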